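/- Define Θ(w) = arctan((1-w)/√(1-w²))/√(1-w²) for 0 < w < 1 and Θ(w) = artanh((w-1)/√(w²-1))/√(w²-1) for w > 1. Then Θ extends continuously to w = 1 with Θ(1) = 1/2, and Θ is continuous on (0, ∞). -/

import Mathlib

open Real Filter

/-- The inverse hyperbolic tangent, artanh x = ½ log((1+x)/(1-x)). -/
noncomputable def artanh (x : ℝ) : ℝ := 1 / 2 * Real.log ((1 + x) / (1 - x))

noncomputable def arctanR (x : ℝ) : ℝ := if x = 0 then 1 else Real.arctan x / x
noncomputable def artanhR (x : ℝ) : ℝ := if x = 0 then 1 else _root_.artanh x / x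

lemma hasDerivAt_artanh_zero : HasDerivAt _root_.artanh 1 0 := by
  have hq : HasDerivAt (fun x : ℝ => (1 + x) / (1 - x)) 2 0 := by
    have h1 : HasDerivAt (fun x : ℝ => 1 + x) 1 0 := by
      simpa using (hasDerivAt_id (0:ℝ)).const_add 1
    have h2 : HasDerivAt (fun x : ℝ => 1 - x) (-1) 0 := by
      simpa using (hasDerivAt_id (0:ℝ)).const_sub 1
    have := h1.div h2 (by norm_num)
    norm_num at this
    exact this
  have hl : HasDerivAt (fun x : ℝ => Real.log ((1 + x) / (1 - x))) 2 0 := by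
    have := hq.log (by norm_num)
    norm_num at this
    exact this
  have := hl.const_mul (1/2 : ℝ)
  norm_num at this
  unfold _root_.artanh
  exact this

lemma continuousAt_ratio {f : ℝ → ℝ} (hf0 : f 0 = 0) (hd : HasDerivAt f 1 0) :
    ContinuousAt (fun x => if x = 0 then 1 else f x / x) 0 := by
  set g := fun x => if x = 0 then 1 else f x / x with hg
  have h := hasDerivAt_iff_tendsto_slope.mp hd
  have h1 : Tendsto g (nhdsWithin 0 {(0:ℝ)}ᶜ) (nhds 1) := by
    refine h.congr' ?_
    filter_upwards [self_mem_nhdsWithin] with x hx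
    have hx0 : x ≠ 0 := hx
    simp [hg, hx0, slope, hf0, div_eq_inv_mul]
  have h2 : Tendsto g (pure (0:ℝ)) (nhds 1) := by
    have : g 0 = 1 := by simp [hg]
    simpa [this] using tendsto_pure_nhds g 0
  have : Tendsto g (nhds 0) (nhds 1) := by
    rw [← nhdsNE_sup_pure (0:ℝ), tendsto_sup]
    exact ⟨h1, h2⟩
  simpa [ContinuousAt, hg] using this

lemma continuousAt_arctanR (x : ℝ) : ContinuousAt arctanR x := by
  rcases eq_or_ne x 0 with rfl | hx
  · exact continuousAt_ratio Real.arctan_zero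
      (by have := Real.hasDerivAt_arctan 0; norm_num at this; exact this)
  · have : ContinuousAt (fun x => Real.arctan x / x) x :=
      (Real.continuous_arctan.continuousAt).div continuousAt_id hx
    refine this.congr ?_
    filter_upwards [isOpen_compl_singleton.mem_nhds hx] with y hy
    have hy' : y ≠ 0 := hy
    simp [arctanR, hy']

lemma continuousAt_artanh {x : ℝ} (hx : |x| < 1) : ContinuousAt _root_.artanh x := by
  have h1 : (0:ℝ) < 1 + x := by cases abs_lt.mp hx; linarith
  have h2 : (0:ℝ) < 1 - x := by cases abs_lt.mp hx; linarith
  have : ContinuousAt (fun x : ℝ => (1 + x) / (1 - x)) x :=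
    (continuousAt_const.add continuousAt_id).div
      (continuousAt_const.sub continuousAt_id) (by linarith)
  exact (continuousAt_const.mul ((this.log (by positivity))))

lemma continuousAt_artanhR {x : ℝ} (hx : |x| < 1) : ContinuousAt artanhR x := by
  rcases eq_or_ne x 0 with rfl | hx0
  · exact continuousAt_ratio (by simp [_root_.artanh]) hasDerivAt_artanh_zero
  · have : ContinuousAt (fun x => _root_.artanh x / x) x :=
      (continuousAt_artanh hx).div continuousAt_id hx0
    refine this.congr ?_
    have hopen : IsOpen {y : ℝ | |y| < 1 ∧ y ≠ 0} := by
      have : {y : ℝ | |y| < 1 ∧ y ≠ 0} = {y | |y| < 1} ∩ {(0:ℝ)}ᶜ := rfl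
      rw [this]
      exact (isOpen_lt (continuous_abs) continuous_const).inter isOpen_compl_singleton
    filter_upwards [hopen.mem_nhds ⟨hx, hx0⟩] with y hy
    simp [artanhR, hy.2]

/-- Θ(w): arctan branch for 0 < w < 1, value 1/2 at w = 1, artanh branch for w > 1. -/
noncomputable def Theta (w : ℝ) : ℝ :=
  if w < 1 then arctan ((1 - w) / Real.sqrt (1 - w ^ 2)) / Real.sqrt (1 - w ^ 2)
  else if w = 1 then 1 / 2
  else _root_.artanh ((w - 1) / Real.sqrt (w ^ 2 - 1)) / Real.sqrt (w ^ 2 - 1)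

noncomputable def ThetaC (w : ℝ) : ℝ :=
  arctanR (Real.sqrt ((1 - w) / (1 + w))) * artanhR (Real.sqrt ((w - 1) / (w + 1))) / (1 + w)

lemma continuousOn_ThetaC : ContinuousOn ThetaC (Set.Ioi (0:ℝ)) := by
  intro w hw
  have hw0 : (0:ℝ) < w := hw
  have h1w : (0:ℝ) < 1 + w := by linarith
  have c1 : ContinuousAt (fun w : ℝ => Real.sqrt ((1 - w) / (1 + w))) w :=
    Real.continuous_sqrt.continuousAt.comp
      (((continuousAt_const.sub continuousAt_id).div
        (continuousAt_const.add continuousAt_id) (by linarith)))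
  have c2 : ContinuousAt (fun w : ℝ => Real.sqrt ((w - 1) / (w + 1))) w :=
    Real.continuous_sqrt.continuousAt.comp
      (((continuousAt_id.sub continuousAt_const).div
        (continuousAt_id.add continuousAt_const) (by linarith)))
  have hv : |Real.sqrt ((w - 1) / (w + 1))| < 1 := by
    rw [abs_of_nonneg (Real.sqrt_nonneg _)]
    rcases le_or_gt ((w - 1) / (w + 1)) 0 with h | h
    · rw [Real.sqrt_eq_zero'.mpr h]; norm_num
    · have h1 : (w - 1) / (w + 1) < 1 := by
        rw [div_lt_one (by linarith)]; linarith
      calc Real.sqrt ((w - 1) / (w + 1)) < Real.sqrt 1 := Real.sqrt_lt_sqrt h.le h1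
        _ = 1 := Real.sqrt_one
  have d1 : ContinuousAt (fun w : ℝ => arctanR (Real.sqrt ((1 - w) / (1 + w)))) w :=
    (continuousAt_arctanR _).comp c1
  have d2 : ContinuousAt (fun w : ℝ => artanhR (Real.sqrt ((w - 1) / (w + 1)))) w :=
    ContinuousAt.comp (x := w) (continuousAt_artanhR hv) c2
  have : ContinuousAt ThetaC w :=
    (d1.mul d2).div (continuousAt_const.add continuousAt_id) (by simpa using h1w.ne')
  exact this.continuousWithinAt

lemma eqOn_Theta_ThetaC : Set.EqOn Theta ThetaC (Set.Ioi (0:ℝ)) := by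
  intro w hw
  have hw0 : (0:ℝ) < w := hw
  have h1w : (0:ℝ) < 1 + w := by linarith
  rcases lt_trichotomy w 1 with h | h | h
  · have hmw : (0:ℝ) < 1 - w := by linarith
    have hs : Real.sqrt (1 - w ^ 2) = Real.sqrt (1 - w) * Real.sqrt (1 + w) := by
      rw [show (1 - w ^ 2 : ℝ) = (1 - w) * (1 + w) by ring, Real.sqrt_mul hmw.le]
    have hu : Real.sqrt ((1 - w) / (1 + w)) = Real.sqrt (1 - w) / Real.sqrt (1 + w) :=
      Real.sqrt_div hmw.le _
    have hsm : Real.sqrt (1 - w) ≠ 0 := by positivity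
    have hsp : Real.sqrt (1 + w) ≠ 0 := by positivity
    have hu0 : Real.sqrt ((1 - w) / (1 + w)) ≠ 0 := by rw [hu]; positivity
    have hz : Real.sqrt ((w - 1) / (w + 1)) = 0 :=
      Real.sqrt_eq_zero'.mpr (div_nonpos_of_nonpos_of_nonneg (by linarith) (by linarith))
    have hu' : (1 - w) / Real.sqrt (1 - w ^ 2) = Real.sqrt ((1 - w) / (1 + w)) := by
      rw [hs, hu,
        show (1 - w : ℝ) = Real.sqrt (1 - w) * Real.sqrt (1 - w) from
          (Real.mul_self_sqrt hmw.le).symm]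
      field_simp
      rw [Real.sqrt_sq (Real.sqrt_nonneg _)]
    have hup : Real.sqrt ((1 - w) / (1 + w)) * (1 + w) = Real.sqrt (1 - w ^ 2) := by
      rw [hu, hs,
        show (1 + w : ℝ) = Real.sqrt (1 + w) * Real.sqrt (1 + w) from
          (Real.mul_self_sqrt h1w.le).symm]
      field_simp
      rw [Real.sqrt_sq (Real.sqrt_nonneg _)]
    simp only [Theta, ThetaC, if_pos h, hz, artanhR, if_pos rfl, if_true, eq_self_iff_true, mul_one, arctanR,
      if_neg hu0]
    rw [hu', div_div, hup]
  · subst h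
    norm_num [Theta, ThetaC, arctanR, artanhR]
  · have hmw : (0:ℝ) < w - 1 := by linarith
    have hp1 : (0:ℝ) < w + 1 := by linarith
    have hs : Real.sqrt (w ^ 2 - 1) = Real.sqrt (w - 1) * Real.sqrt (w + 1) := by
      rw [show (w ^ 2 - 1 : ℝ) = (w - 1) * (w + 1) by ring, Real.sqrt_mul hmw.le]
    have hu : Real.sqrt ((w - 1) / (w + 1)) = Real.sqrt (w - 1) / Real.sqrt (w + 1) :=
      Real.sqrt_div hmw.le _
    have hsm : Real.sqrt (w - 1) ≠ 0 := by positivity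
    have hsp : Real.sqrt (w + 1) ≠ 0 := by positivity
    have hu0 : Real.sqrt ((w - 1) / (w + 1)) ≠ 0 := by rw [hu]; positivity
    have hz : Real.sqrt ((1 - w) / (1 + w)) = 0 :=
      Real.sqrt_eq_zero'.mpr (div_nonpos_of_nonpos_of_nonneg (by linarith) (by linarith))
    have hu' : (w - 1) / Real.sqrt (w ^ 2 - 1) = Real.sqrt ((w - 1) / (w + 1)) := by
      rw [hs, hu,
        show (w - 1 : ℝ) = Real.sqrt (w - 1) * Real.sqrt (w - 1) from
          (Real.mul_self_sqrt hmw.le).symm]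
      field_simp
      rw [Real.sqrt_sq (Real.sqrt_nonneg _)]
    have hup : Real.sqrt ((w - 1) / (w + 1)) * (1 + w) = Real.sqrt (w ^ 2 - 1) := by
      rw [hu, hs,
        show (1 + w : ℝ) = Real.sqrt (w + 1) * Real.sqrt (w + 1) by
          rw [Real.mul_self_sqrt hp1.le]; ring]
      field_simp
    simp only [Theta, ThetaC, if_neg (not_lt.mpr h.le), if_neg h.ne', hz, arctanR,
      if_pos rfl, if_true, eq_self_iff_true, one_mul, artanhR, if_neg hu0]
    rw [hu', div_div, hup]

/-- Θ extends continuously to w = 1 with Θ(1) = 1/2, and Θ is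
continuous on (0, ∞). -/
theorem stmt_19 : Theta 1 = 1 / 2 ∧ ContinuousOn Theta (Set.Ioi (0 : ℝ)) := by
  constructor
  · norm_num [Theta]
  · exact continuousOn_ThetaC.congr eqOn_Theta_ThetaC
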